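/- If Y_1, ..., Y_p are independent real-valued regularly varying random variables with comparable tails, then P(Y_1 + ... + Y_p > x, max(Y_1, ..., Y_p) ≤ x) = o(P(Y_1 + ... + Y_p > x)) as x → ∞. -/

import Mathlib

open MeasureTheory ProbabilityTheory Filter Topology

/-- `f ~ g` at infinity: the ratio tends to 1. -/
def Asymp (f g : ℝ → ℝ) : Prop := Tendsto (fun x => f x / g x) atTop (𝓝 1)

/-- A slowly varying function: eventually positive and `ℓ(cx)/ℓ(x) → 1` for all `c > 0`. -/
def SlowlyVarying (ℓ : ℝ → ℝ) : Prop :=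
  (∀ᶠ x in atTop, 0 < ℓ x) ∧ ∀ c > 0, Tendsto (fun x => ℓ (c * x) / ℓ x) atTop (𝓝 1)

/-- The (real-valued) upper tail probability function of `Y` under `μ`. -/
noncomputable def tailP {Ω : Type*} [MeasurableSpace Ω] (μ : Measure Ω) (Y : Ω → ℝ) (x : ℝ) : ℝ :=
  (μ {ω | x < Y ω}).toReal

set_option maxHeartbeats 1000000

lemma aux_measure_tendsto_zero {Ω : Type*} [MeasurableSpace Ω] (μ : Measure Ω)
    [IsFiniteMeasure μ] (s : ℝ → Set Ω) (hm : ∀ x, MeasurableSet (s x))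
    (hanti : Antitone s) (hempty : ⋂ x : ℝ, s x = ∅) :
    Tendsto (fun x => (μ (s x)).toReal) atTop (𝓝 0) := by
  have h := tendsto_measure_iInter_atTop (μ := μ) (s := s)
    (fun x => (hm x).nullMeasurableSet) hanti ⟨0, measure_ne_top μ _⟩
  rw [hempty, measure_empty] at h
  have h2 : Tendsto (fun x => (μ (s x)).toReal) atTop (𝓝 ((0 : ENNReal)).toReal) :=
    (ENNReal.tendsto_toReal (by simp)).comp h
  simpa using h2

lemma aux_L_ratio {ℓ : ℝ → ℝ} (hℓ : SlowlyVarying ℓ) (α : ℝ) {k : ℝ} (hk : 0 < k) :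
    Tendsto (fun x => (ℓ (k * x) * (k * x) ^ (-α)) / (ℓ x * x ^ (-α))) atTop
      (𝓝 (k ^ (-α))) := by
  have h1 : Tendsto (fun x => ℓ (k * x) / ℓ x * k ^ (-α)) atTop (𝓝 (k ^ (-α))) := by
    simpa using (hℓ.2 k hk).mul_const (k ^ (-α))
  refine h1.congr' ?_
  filter_upwards [hℓ.1, eventually_gt_atTop (0 : ℝ)] with x hx hx0
  have hxne : x ^ (-α) ≠ 0 := (Real.rpow_pos_of_pos hx0 _).ne'
  rw [Real.mul_rpow hk.le hx0.le]
  field_simp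

theorem sum_large_max_small_negligible
    {Ω : Type*} [MeasurableSpace Ω] (μ : Measure Ω) [IsProbabilityMeasure μ]
    (p : ℕ) [NeZero p] (Y : Fin p → Ω → ℝ) (hmeas : ∀ j, Measurable (Y j))
    (hindep : iIndepFun Y μ)
    (α : ℝ) (hα : 0 < α) (ℓ : ℝ → ℝ) (hℓ : SlowlyVarying ℓ)
    (c : Fin p → ℝ) (hc : ∀ j, 0 < c j)
    (htail : ∀ j, Asymp (tailP μ (Y j)) (fun x => c j * ℓ x * x ^ (-α))) :
    Tendsto
      (fun x => (μ {ω | x < ∑ h, Y h ω ∧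
          Finset.univ.sup' Finset.univ_nonempty (fun j => Y j ω) ≤ x}).toReal /
        tailP μ (fun ω => ∑ h, Y h ω) x)
      atTop (𝓝 0) := by
  classical
  set L : ℝ → ℝ := fun x => ℓ x * x ^ (-α) with hLdef
  set T : Fin p → ℝ → ℝ := fun j x => tailP μ (Y j) x with hTdef
  set S : Ω → ℝ := fun ω => ∑ h, Y h ω with hSdef
  set D : ℝ → ℝ := fun x => tailP μ S x with hDdef
  set N : ℝ → ℝ := fun x => (μ {ω | x < S ω ∧
      Finset.univ.sup' Finset.univ_nonempty (fun j => Y j ω) ≤ x}).toReal with hNdef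
  suffices hgoal : Tendsto (fun x => N x / D x) atTop (𝓝 0) by exact hgoal
  have hp1 : (1:ℝ) ≤ (p:ℝ) := by exact_mod_cast Nat.one_le_iff_ne_zero.mpr (NeZero.ne p)
  have hppos : (0:ℝ) < (p:ℝ) := lt_of_lt_of_le one_pos hp1
  have hSmeas : Measurable S := Finset.measurable_sum _ (fun i _ => hmeas i)
  have hLpos : ∀ᶠ x in atTop, 0 < L x := by
    filter_upwards [hℓ.1, eventually_gt_atTop (0:ℝ)] with x h1 h2
    exact mul_pos h1 (Real.rpow_pos_of_pos h2 _)
  have hmulk : ∀ k : ℝ, 0 < k → Tendsto (fun x : ℝ => k * x) atTop atTop := by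
    intro k hk
    exact Tendsto.const_mul_atTop hk tendsto_id
  have hTL : ∀ j, Tendsto (fun x => T j x / L x) atTop (𝓝 (c j)) := by
    intro j
    have h1 : Tendsto (fun x => c j * (T j x / (c j * ℓ x * x ^ (-α)))) atTop (𝓝 (c j)) := by
      simpa using (htail j).const_mul (c j)
    refine h1.congr' ?_
    filter_upwards [hLpos] with x hx
    have hcne := (hc j).ne'
    have hLne : L x ≠ 0 := hx.ne'
    have : c j * ℓ x * x ^ (-α) = c j * L x := by rw [hLdef]; ring
    rw [this]
    field_simp
  have hT0 : ∀ j, Tendsto (fun x => T j x) atTop (𝓝 0) := by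
    intro j
    refine aux_measure_tendsto_zero μ (fun x => {ω | x < Y j ω})
      (fun x => measurableSet_lt measurable_const (hmeas j)) ?_ ?_
    · intro x y hxy ω hω
      exact lt_of_le_of_lt hxy hω
    · ext ω
      simp only [Set.mem_iInter, Set.mem_setOf_eq, Set.mem_empty_iff_false, iff_false, not_forall,
        not_lt]
      exact ⟨Y j ω, le_refl _⟩
  have hL0 : Tendsto L atTop (𝓝 0) := by
    have h1 : Tendsto (fun x => T 0 x * (T 0 x / L x)⁻¹) atTop (𝓝 (0 * (c 0)⁻¹)) :=
      (hT0 0).mul ((hTL 0).inv₀ (hc 0).ne')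
    rw [zero_mul] at h1
    refine h1.congr' ?_
    filter_upwards [hLpos, (hTL 0).eventually (eventually_gt_nhds (half_lt_self (hc 0)))]
      with x hx hgt
    have hTne : T 0 x ≠ 0 := by
      intro h0
      rw [h0, zero_div] at hgt
      linarith [half_pos (hc 0)]
    field_simp
  have hOne : ∀ j, Tendsto (fun x => (μ {ω | -(x/p) < Y j ω}).toReal) atTop (𝓝 1) := by
    intro j
    have haux : Tendsto (fun x => (μ {ω | Y j ω ≤ -(x/p)}).toReal) atTop (𝓝 0) := by
      refine aux_measure_tendsto_zero μ _
        (fun x => measurableSet_le (hmeas j) measurable_const) ?_ ?_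
      · intro x y hxy ω hω
        simp only [Set.mem_setOf_eq] at *
        have h1 : x / p ≤ y / p := by gcongr
        linarith
      · ext ω
        simp only [Set.mem_iInter, Set.mem_setOf_eq, Set.mem_empty_iff_false, iff_false,
          not_forall, not_le]
        refine ⟨p * (1 + |Y j ω|), ?_⟩
        have he : (p:ℝ) * (1 + |Y j ω|) / p = 1 + |Y j ω| :=
          mul_div_cancel_left₀ _ hppos.ne'
        rw [he]
        have := neg_abs_le (Y j ω)
        linarith
    have hco : ∀ t : ℝ, (μ {ω | -t < Y j ω}).toReal = 1 - (μ {ω | Y j ω ≤ -t}).toReal := by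
      intro t
      have hset : {ω | -t < Y j ω} = {ω | Y j ω ≤ -t}ᶜ := by
        ext ω
        simp [not_le]
      rw [hset, measure_compl (measurableSet_le (hmeas j) measurable_const) (measure_ne_top μ _),
        measure_univ, ENNReal.toReal_sub_of_le prob_le_one ENNReal.one_ne_top, ENNReal.toReal_one]
    have h2 : Tendsto (fun x => 1 - (μ {ω | Y j ω ≤ -(x/p)}).toReal) atTop (𝓝 (1 - 0)) :=
      tendsto_const_nhds.sub haux
    rw [sub_zero] at h2
    exact h2.congr (fun x => (hco (x/p)).symm)
  -- composed limits
  have hTLk : ∀ j, ∀ k : ℝ, 0 < k → Tendsto (fun x => T j (k*x) / L (k*x)) atTop (𝓝 (c j)) :=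
    fun j k hk => (hTL j).comp (hmulk k hk)
  have hLratio : ∀ k : ℝ, 0 < k → Tendsto (fun x => L (k*x) / L x) atTop (𝓝 (k ^ (-α))) :=
    fun k hk => aux_L_ratio hℓ α hk
  have hLposk : ∀ k : ℝ, 0 < k → ∀ᶠ x in atTop, 0 < L (k*x) :=
    fun k hk => (hmulk k hk).eventually hLpos
  -- Denominator lower bound
  set K : ℝ := c 0 * 2 ^ (-α) / 2 with hKdef
  have hKpos : 0 < K := by
    apply div_pos (mul_pos (hc 0) (Real.rpow_pos_of_pos two_pos _)) two_pos
  set G : ℝ → ℝ := fun x => T 0 (2*x) * ∏ i ∈ Finset.univ.erase (0 : Fin p),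
      (μ {ω | -(x/p) < Y i ω}).toReal with hGdef
  have hGD : ∀ᶠ x in atTop, G x ≤ D x := by
    filter_upwards [eventually_gt_atTop (0:ℝ)] with x hx
    set a : Fin p → ℝ := fun i => if i = 0 then 2*x else -(x/p) with hadef
    have hprod : μ (⋂ i, Y i ⁻¹' Set.Ioi (a i)) = ∏ i, μ (Y i ⁻¹' Set.Ioi (a i)) :=
      hindep.meas_iInter (fun i => ⟨Set.Ioi (a i), measurableSet_Ioi, rfl⟩)
    have hincl : (⋂ i, Y i ⁻¹' Set.Ioi (a i)) ⊆ {ω | x < S ω} := by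
      intro ω hω
      simp only [Set.mem_iInter, Set.mem_preimage, Set.mem_Ioi] at hω
      have h0 : 2*x < Y 0 ω := by simpa [hadef] using hω 0
      have hrest : ∀ i ∈ Finset.univ.erase (0 : Fin p), -(x/p) ≤ Y i ω := by
        intro i hi
        have hine : i ≠ 0 := Finset.ne_of_mem_erase hi
        have := hω i
        simp only [hadef, if_neg hine] at this
        exact this.le
      have hsum : ((Finset.univ.erase (0 : Fin p)).card : ℝ) * (-(x/p)) ≤
          ∑ i ∈ Finset.univ.erase (0 : Fin p), Y i ω := by
        simpa using Finset.card_nsmul_le_sum _ _ _ hrest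
      have hcard : ((Finset.univ.erase (0 : Fin p)).card : ℝ) = (p:ℝ) - 1 := by
        rw [Finset.card_erase_of_mem (Finset.mem_univ _), Finset.card_univ, Fintype.card_fin]
        have : (1:ℕ) ≤ p := Nat.one_le_iff_ne_zero.mpr (NeZero.ne p)
        push_cast [Nat.cast_sub this]
        ring
      rw [hcard] at hsum
      have hS : S ω = Y 0 ω + ∑ i ∈ Finset.univ.erase (0 : Fin p), Y i ω :=
        (Finset.add_sum_erase _ _ (Finset.mem_univ _)).symm
      simp only [Set.mem_setOf_eq]
      rw [hS]
      have hb : ((p:ℝ) - 1) * (-(x/p)) ≥ -x := by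
        rw [ge_iff_le, neg_le, ← mul_neg, neg_neg]
        calc ((p:ℝ)-1) * (x/p) ≤ (p:ℝ) * (x/p) := by
              apply mul_le_mul_of_nonneg_right (by linarith) (by positivity)
          _ = x := by field_simp
      linarith
    have hle : μ (⋂ i, Y i ⁻¹' Set.Ioi (a i)) ≤ μ {ω | x < S ω} := measure_mono hincl
    have hsplit : G x = (∏ i, μ (Y i ⁻¹' Set.Ioi (a i))).toReal := by
      rw [ENNReal.toReal_prod, ← Finset.mul_prod_erase _ _ (Finset.mem_univ (0 : Fin p)), hGdef]
      have ha0 : a 0 = 2*x := by simp [hadef]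
      refine congrArg₂ (· * ·) ?_ (Finset.prod_congr rfl fun i hi => ?_)
      · rw [ha0]
        rfl
      · have hai : a i = -(x/p) := by simp [hadef, Finset.ne_of_mem_erase hi]
        rw [hai]
        rfl
    rw [hsplit, ← hprod]
    exact ENNReal.toReal_mono (measure_ne_top μ _) hle
  have hGL : Tendsto (fun x => G x / L x) atTop (𝓝 (c 0 * 2 ^ (-α))) := by
    have hprodlim : Tendsto (fun x => ∏ i ∈ Finset.univ.erase (0 : Fin p),
        (μ {ω | -(x/p) < Y i ω}).toReal) atTop (𝓝 1) := by
      have h := tendsto_finset_prod (f := fun i x => (μ {ω | -(x/(p:ℝ)) < Y i ω}).toReal)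
        (Finset.univ.erase (0 : Fin p)) (fun i _ => hOne i)
      simpa using h
    have hmain : Tendsto (fun x => (T 0 (2*x) / L (2*x)) * (L (2*x) / L x) *
        ∏ i ∈ Finset.univ.erase (0 : Fin p), (μ {ω | -(x/p) < Y i ω}).toReal) atTop
        (𝓝 (c 0 * 2 ^ (-α) * 1)) :=
      ((hTLk 0 2 two_pos).mul (hLratio 2 two_pos)).mul hprodlim
    rw [mul_one] at hmain
    refine hmain.congr' ?_
    filter_upwards [hLpos, hLposk 2 two_pos] with x h1 h2
    rw [hGdef]
    field_simp
  have hD : ∀ᶠ x in atTop, K * L x ≤ D x ∧ 0 < D x := by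
    have hKlt : K < c 0 * 2 ^ (-α) := by
      rw [hKdef]
      linarith [hKpos]
    filter_upwards [hGD, hLpos, hGL.eventually (eventually_gt_nhds hKlt)] with x h1 h2 h3
    have hGx : K * L x < G x := (lt_div_iff₀ h2).mp h3
    exact ⟨by linarith, by nlinarith⟩
  -- final epsilon argument
  rw [NormedAddCommGroup.tendsto_nhds_zero]
  intro ε hε
  -- choose δ
  have hcont : Tendsto (fun d : ℝ => ∑ j, c j * ((1-d) ^ (-α) - 1)) (𝓝 0) (𝓝 0) := by
    have hterm : ∀ j : Fin p, Tendsto (fun d : ℝ => c j * ((1-d) ^ (-α) - 1)) (𝓝 0)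
        (𝓝 (c j * (((1:ℝ)-0) ^ (-α) - 1))) := by
      intro j
      have hb : Tendsto (fun d : ℝ => (1-d)) (𝓝 0) (𝓝 ((1:ℝ)-0)) :=
        (continuous_const.sub continuous_id).tendsto 0
      have hr : Tendsto (fun d : ℝ => (1-d) ^ (-α)) (𝓝 0) (𝓝 (((1:ℝ)-0) ^ (-α))) :=
        (Real.continuousAt_rpow_const _ _ (Or.inl (by norm_num))).tendsto.comp hb
      exact (hr.sub_const 1).const_mul _
    have h := tendsto_finset_sum (Finset.univ : Finset (Fin p)) (fun j _ => hterm j)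
    simpa using h
  have hsd : ∀ᶠ d in 𝓝 (0:ℝ), ∑ j, c j * ((1-d) ^ (-α) - 1) < ε * K / 4 :=
    hcont.eventually (gt_mem_nhds (by positivity))
  obtain ⟨r, hr0, hr⟩ := Metric.eventually_nhds_iff.mp hsd
  set δ : ℝ := min (r/2) (1/2) with hδdef
  have hδ0 : 0 < δ := by positivity
  have hδ1 : δ < 1 := lt_of_le_of_lt (min_le_right _ _) (by norm_num)
  have h1δ : 0 < 1 - δ := by linarith
  have hs : ∑ j, c j * ((1-δ) ^ (-α) - 1) < ε * K / 4 := by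
    apply hr
    rw [Real.dist_eq, sub_zero, abs_of_pos hδ0]
    exact lt_of_le_of_lt (min_le_left _ _) (by linarith)
  set β : ℝ := δ / p with hβdef
  have hβ0 : 0 < β := div_pos hδ0 hppos
  set F1 : ℝ → ℝ := fun x => ∑ q ∈ (Finset.univ.offDiag : Finset (Fin p × Fin p)),
    T q.1 (β*x) * T q.2 (β*x) with hF1def
  set F2 : ℝ → ℝ := fun x => ∑ j, (T j ((1-δ)*x) - T j x) with hF2def
  have hF1 : Tendsto (fun x => F1 x / L x) atTop (𝓝 0) := by
    have hterm : ∀ q : Fin p × Fin p, Tendsto (fun x => T q.1 (β*x) * T q.2 (β*x) / L x)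
        atTop (𝓝 0) := by
      intro q
      have hm : Tendsto (fun x => (T q.1 (β*x) / L (β*x)) * (T q.2 (β*x) / L (β*x)) *
          ((L (β*x) / L x) * L (β*x))) atTop
          (𝓝 (c q.1 * c q.2 * (β ^ (-α) * 0))) := by
        refine Tendsto.mul ((hTLk q.1 β hβ0).mul (hTLk q.2 β hβ0)) ?_
        exact (hLratio β hβ0).mul (hL0.comp (hmulk β hβ0))
      rw [mul_zero, mul_zero] at hm
      refine hm.congr' ?_
      filter_upwards [hLpos, hLposk β hβ0] with x h1 h2
      field_simp
    have h := tendsto_finset_sum (Finset.univ.offDiag : Finset (Fin p × Fin p))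
      (fun q _ => hterm q)
    rw [Finset.sum_const_zero] at h
    refine h.congr (fun x => ?_)
    rw [hF1def, Finset.sum_div]
  have hF2 : Tendsto (fun x => F2 x / L x) atTop (𝓝 (∑ j, c j * ((1-δ) ^ (-α) - 1))) := by
    have hterm : ∀ j : Fin p, Tendsto (fun x => (T j ((1-δ)*x) - T j x) / L x) atTop
        (𝓝 (c j * ((1-δ) ^ (-α) - 1))) := by
      intro j
      have hm : Tendsto (fun x => (T j ((1-δ)*x) / L ((1-δ)*x)) * (L ((1-δ)*x) / L x) -
          T j x / L x) atTop (𝓝 (c j * (1-δ) ^ (-α) - c j)) :=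
        ((hTLk j (1-δ) h1δ).mul (hLratio (1-δ) h1δ)).sub (hTL j)
      have heq : c j * (1-δ) ^ (-α) - c j = c j * ((1-δ) ^ (-α) - 1) := by ring
      rw [heq] at hm
      refine hm.congr' ?_
      filter_upwards [hLpos, hLposk (1-δ) h1δ] with x h1 h2
      field_simp
    have h := tendsto_finset_sum (Finset.univ : Finset (Fin p)) (fun j _ => hterm j)
    refine h.congr (fun x => ?_)
    rw [hF2def, Finset.sum_div]
  have hNle : ∀ᶠ x in atTop, N x ≤ F1 x + F2 x := by
    filter_upwards [eventually_gt_atTop (0:ℝ)] with x hx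
    set A : Fin p × Fin p → Set Ω := fun q => {ω | β*x < Y q.1 ω} ∩ {ω | β*x < Y q.2 ω}
      with hAdef
    set B : Fin p → Set Ω := fun j => {ω | (1-δ)*x < Y j ω} \ {ω | x < Y j ω} with hBdef
    have hincl : {ω | x < S ω ∧
        Finset.univ.sup' Finset.univ_nonempty (fun j => Y j ω) ≤ x} ⊆
        (⋃ q ∈ (Finset.univ.offDiag : Finset (Fin p × Fin p)), A q) ∪
        (⋃ j ∈ (Finset.univ : Finset (Fin p)), B j) := by
      intro ω hω
      obtain ⟨hSx, hMx⟩ := hω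
      have hMx' : ∀ j, Y j ω ≤ x := fun j =>
        le_trans (Finset.le_sup' (f := fun j => Y j ω) (Finset.mem_univ j)) hMx
      by_contra hcon
      have hU1 : ω ∉ ⋃ q ∈ (Finset.univ.offDiag : Finset (Fin p × Fin p)), A q :=
        fun h => hcon (Or.inl h)
      have hU2 : ω ∉ ⋃ j ∈ (Finset.univ : Finset (Fin p)), B j :=
        fun h => hcon (Or.inr h)
      have h1 : ∀ i j : Fin p, i ≠ j → ¬(β*x < Y i ω ∧ β*x < Y j ω) := by
        intro i j hij hcontra
        refine hU1 (Set.mem_biUnion (show ((i,j) : Fin p × Fin p) ∈ Finset.univ.offDiag by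
          simp [Finset.mem_offDiag, hij]) ?_)
        exact ⟨hcontra.1, hcontra.2⟩
      have h2 : ∀ j, Y j ω ≤ (1-δ)*x := by
        intro j
        by_contra hlt
        push_neg at hlt
        exact hU2 (Set.mem_biUnion (Finset.mem_univ j) ⟨hlt, not_lt.mpr (hMx' j)⟩)
      by_cases hbig : ∃ i0, β*x < Y i0 ω
      · obtain ⟨i0, hi0⟩ := hbig
        have hsmall : ∀ j ∈ Finset.univ.erase i0, Y j ω ≤ β*x := by
          intro j hj
          by_contra hl
          push_neg at hl
          exact h1 j i0 (Finset.ne_of_mem_erase hj) ⟨hl, hi0⟩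
        have hsum : ∑ j ∈ Finset.univ.erase i0, Y j ω ≤
            ((Finset.univ.erase i0).card : ℝ) * (β*x) := by
          simpa using Finset.sum_le_card_nsmul _ _ _ hsmall
        have hcard : ((Finset.univ.erase i0).card : ℝ) = (p:ℝ) - 1 := by
          rw [Finset.card_erase_of_mem (Finset.mem_univ _), Finset.card_univ, Fintype.card_fin]
          have : (1:ℕ) ≤ p := Nat.one_le_iff_ne_zero.mpr (NeZero.ne p)
          push_cast [Nat.cast_sub this]
          ring
        rw [hcard] at hsum
        have hSeq : S ω = Y i0 ω + ∑ j ∈ Finset.univ.erase i0, Y j ω :=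
          (Finset.add_sum_erase _ _ (Finset.mem_univ _)).symm
        have hkey : ((p:ℝ) - 1) * (β*x) = (δ - β)*x := by
          rw [hβdef]
          field_simp
        rw [hkey] at hsum
        have : S ω ≤ (1-δ)*x + (δ - β)*x := by
          rw [hSeq]
          exact add_le_add (h2 i0) hsum
        have hβx : 0 < β*x := mul_pos hβ0 hx
        nlinarith
      · push_neg at hbig
        have hsum : ∑ j, Y j ω ≤ (p:ℝ) * (β*x) := by
          simpa using Finset.sum_le_card_nsmul Finset.univ (fun j => Y j ω) (β*x)
            (fun j _ => hbig j)
        have hpβ : (p:ℝ) * (β*x) = δ*x := by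
          rw [hβdef]
          field_simp
        rw [hpβ] at hsum
        have : S ω = ∑ j, Y j ω := rfl
        nlinarith [hSx, this ▸ hSx]
    have hU1b : (μ (⋃ q ∈ (Finset.univ.offDiag : Finset (Fin p × Fin p)), A q)).toReal ≤
        F1 x := by
      calc (μ (⋃ q ∈ (Finset.univ.offDiag : Finset (Fin p × Fin p)), A q)).toReal
          ≤ (∑ q ∈ Finset.univ.offDiag, μ (A q)).toReal := by
            apply ENNReal.toReal_mono
            · exact (ENNReal.sum_lt_top.mpr (fun q _ => measure_lt_top μ _)).ne
            · exact measure_biUnion_finset_le _ _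
        _ = ∑ q ∈ Finset.univ.offDiag, (μ (A q)).toReal :=
            ENNReal.toReal_sum (fun q _ => measure_ne_top μ _)
        _ = F1 x := by
            rw [hF1def]
            refine Finset.sum_congr rfl (fun q hq => ?_)
            have hne : q.1 ≠ q.2 := (Finset.mem_offDiag.mp hq).2.2
            have hind := hindep.indepFun hne
            have hmul := hind.measure_inter_preimage_eq_mul (Set.Ioi (β*x)) (Set.Ioi (β*x))
              measurableSet_Ioi measurableSet_Ioi
            have : μ (A q) = μ {ω | β*x < Y q.1 ω} * μ {ω | β*x < Y q.2 ω} := hmul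
            rw [this, ENNReal.toReal_mul]
            rfl
    have hU2b : (μ (⋃ j ∈ (Finset.univ : Finset (Fin p)), B j)).toReal ≤ F2 x := by
      calc (μ (⋃ j ∈ (Finset.univ : Finset (Fin p)), B j)).toReal
          ≤ (∑ j, μ (B j)).toReal := by
            apply ENNReal.toReal_mono
            · exact (ENNReal.sum_lt_top.mpr (fun q _ => measure_lt_top μ _)).ne
            · exact measure_biUnion_finset_le _ _
        _ = ∑ j, (μ (B j)).toReal := ENNReal.toReal_sum (fun j _ => measure_ne_top μ _)
        _ = F2 x := by
            rw [hF2def]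
            refine Finset.sum_congr rfl (fun j _ => ?_)
            have hss : {ω | x < Y j ω} ⊆ {ω | (1-δ)*x < Y j ω} := by
              intro ω hω
              simp only [Set.mem_setOf_eq] at *
              nlinarith
            have hdiff : μ (B j) = μ {ω | (1-δ)*x < Y j ω} - μ {ω | x < Y j ω} :=
              measure_diff hss (measurableSet_lt measurable_const (hmeas j)).nullMeasurableSet
                (measure_ne_top μ _)
            rw [hdiff, ENNReal.toReal_sub_of_le (measure_mono hss) (measure_ne_top μ _)]
            rfl
    calc N x ≤ ((μ (⋃ q ∈ (Finset.univ.offDiag : Finset (Fin p × Fin p)), A q)) +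
          (μ (⋃ j ∈ (Finset.univ : Finset (Fin p)), B j))).toReal := by
          apply ENNReal.toReal_mono
          · exact ENNReal.add_ne_top.mpr ⟨measure_ne_top μ _, measure_ne_top μ _⟩
          · exact le_trans (measure_mono hincl) (measure_union_le _ _)
      _ = (μ (⋃ q ∈ (Finset.univ.offDiag : Finset (Fin p × Fin p)), A q)).toReal +
          (μ (⋃ j ∈ (Finset.univ : Finset (Fin p)), B j)).toReal :=
          ENNReal.toReal_add (measure_ne_top μ _) (measure_ne_top μ _)
      _ ≤ F1 x + F2 x := add_le_add hU1b hU2b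
  have hKε : (0:ℝ) < ε * K / 4 := by positivity
  filter_upwards [hNle, hF1.eventually (gt_mem_nhds hKε), hF2.eventually (gt_mem_nhds hs),
    hLpos, hD] with x h1 h2 h3 h4 h5
  have hF1x : F1 x < ε * K / 4 * L x := (div_lt_iff₀ h4).mp h2
  have hF2x : F2 x < ε * K / 4 * L x := (div_lt_iff₀ h4).mp h3
  have hDpos : 0 < D x := h5.2
  have hNx : N x < ε * D x := by
    have : N x < ε * K / 2 * L x := by linarith
    have h6 : ε * K / 2 * L x ≤ ε / 2 * D x := by
      have := h5.1
      nlinarith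
    nlinarith
  have hN0 : 0 ≤ N x := ENNReal.toReal_nonneg
  rw [Real.norm_eq_abs, abs_of_nonneg (div_nonneg hN0 hDpos.le)]
  exact (div_lt_iff₀ hDpos).mpr hNx
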